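/- Let s ≥ 0 and r > 1/2. For periodic functions f ∈ H^s(𝕋) and g ∈ H^r(𝕋), the positive-frequency projection of the product f·(P₋g) satisfies ‖P₊(f P₋g)‖_{H^s} ≤ C ‖f‖_{H^s} ‖g‖_{H^r}, where P₊ projects onto positive Fourier modes and P₋ onto negative Fourier modes. -/

import Mathlib

noncomputable section

/-- Japanese bracket of an integer: ⟨m⟩ = √(1 + m²). -/
def jb (m : ℤ) : ℝ := Real.sqrt (1 + (m : ℝ) ^ 2)

/-- Sobolev H^s norm of a sequence of Fourier coefficients. -/
def hsNorm (s : ℝ) (a : ℤ → ℂ) : ℝ := Real.sqrt (∑' k : ℤ, jb k ^ (2 * s) * ‖a k‖ ^ 2)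

/-- Fourier coefficients of P₊(f · (P₋ g)): positive-frequency projection of the
product of f with the negative-frequency part of g. -/
def PpfPmg (f g : ℤ → ℂ) : ℤ → ℂ := fun n =>
  if 0 < n then ∑' k : ℤ, f (n - k) * (if k < 0 then g k else 0) else 0

lemma jb_nonneg (m : ℤ) : 0 ≤ jb m := Real.sqrt_nonneg _

lemma one_le_jb (m : ℤ) : 1 ≤ jb m := by
  have : (1:ℝ) ≤ 1 + (m:ℝ)^2 := by nlinarith [sq_nonneg ((m:ℝ))]
  simpa [jb] using Real.one_le_sqrt.mpr this

lemma jb_pos (m : ℤ) : 0 < jb m := lt_of_lt_of_le one_pos (one_le_jb m)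

lemma abs_le_jb (m : ℤ) : |(m:ℝ)| ≤ jb m := by
  rw [jb, ← Real.sqrt_sq_eq_abs]
  exact Real.sqrt_le_sqrt (by nlinarith)

lemma jb_le_jb {a b : ℤ} (h0 : 0 ≤ a) (h : a ≤ b) : jb a ≤ jb b := by
  apply Real.sqrt_le_sqrt
  have h0' : (0:ℝ) ≤ (a:ℝ) := by exact_mod_cast h0
  have h' : (a:ℝ) ≤ (b:ℝ) := by exact_mod_cast h
  nlinarith

lemma rpow_sq {x : ℝ} (hx : 0 < x) (s : ℝ) : (x ^ s) ^ 2 = x ^ (2*s) := by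
  rw [sq, ← Real.rpow_add hx]; ring_nf

lemma one_le_jb_rpow (m : ℤ) {s : ℝ} (hs : 0 ≤ s) : 1 ≤ jb m ^ s :=
  Real.one_le_rpow (one_le_jb m) hs

lemma tsum_cs {u v : ℤ → ℝ} (hu : ∀ k, 0 ≤ u k) (hv : ∀ k, 0 ≤ v k)
    (hu2 : Summable fun k => u k ^ 2) (hv2 : Summable fun k => v k ^ 2) :
    ∑' k, u k * v k ≤ Real.sqrt (∑' k, u k ^ 2) * Real.sqrt (∑' k, v k ^ 2) := by
  have hsum : Summable fun k => u k * v k := by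
    apply Summable.of_nonneg_of_le (fun k => mul_nonneg (hu k) (hv k))
      (fun k => ?_) ((hu2.add hv2).mul_left (1/2 : ℝ))
    nlinarith [sq_nonneg (u k - v k)]
  refine Summable.tsum_le_of_sum_le hsum fun t => ?_
  calc ∑ k ∈ t, u k * v k
      ≤ Real.sqrt (∑ k ∈ t, u k ^ 2) * Real.sqrt (∑ k ∈ t, v k ^ 2) :=
        Real.sum_mul_le_sqrt_mul_sqrt t u v
    _ ≤ _ := by
        gcongr <;>
          [exact Summable.sum_le_tsum t (fun k _ => sq_nonneg _) hu2;
           exact Summable.sum_le_tsum t (fun k _ => sq_nonneg _) hv2]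

lemma summable_w {r : ℝ} (hr : 1/2 < r) : Summable fun k : ℤ => jb k ^ (-(2*r)) := by
  have h2r : 1 < 2*r := by linarith
  have h1 : Summable fun k : ℤ => 1/|(k:ℝ) + 0|^(2*r) :=
    (Real.summable_one_div_int_add_rpow 0 (2*r)).2 h2r
  have hδ : Summable (fun k : ℤ => if k = 0 then (1:ℝ) else 0) := by
    apply summable_of_ne_finset_zero (s := {0})
    intro k hk; simp only [Finset.mem_singleton] at hk; simp [hk]
  apply Summable.of_nonneg_of_le (fun k => (Real.rpow_pos_of_pos (jb_pos k) _).le)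
    (fun k => ?_) (h1.add hδ)
  rcases eq_or_ne k 0 with rfl | hk
  · have : jb 0 = 1 := by simp [jb]
    simp [this, Real.one_rpow, Real.zero_rpow (by positivity : 2*r ≠ 0)]
  · have hk1 : (1:ℝ) ≤ |(k:ℝ)| := by
      rw [← Int.cast_abs]; exact_mod_cast Int.one_le_abs hk
    have h2 : jb k ^ (-(2*r)) ≤ |(k:ℝ)| ^ (-(2*r)) :=
      Real.rpow_le_rpow_of_nonpos (by linarith) (abs_le_jb k) (by linarith)
    have heq : |(k:ℝ)| ^ (-(2*r)) = 1/|(k:ℝ)+0|^(2*r) := by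
      rw [add_zero, Real.rpow_neg (abs_nonneg _), one_div]
    rw [heq] at h2
    simpa [hk] using h2


/-- ‖P₊(f P₋g)‖_{H^s} ≤ C ‖f‖_{H^s} ‖g‖_{H^r} for s ≥ 0, r > 1/2. -/
theorem stmt_1 (s r : ℝ) (hs : 0 ≤ s) (hr : 1 / 2 < r) :
    ∃ C > 0, ∀ f g : ℤ → ℂ,
      Summable (fun k : ℤ => jb k ^ (2 * s) * ‖f k‖ ^ 2) →
      Summable (fun k : ℤ => jb k ^ (2 * r) * ‖g k‖ ^ 2) →
      Summable (fun n : ℤ => jb n ^ (2 * s) * ‖PpfPmg f g n‖ ^ 2) ∧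
      hsNorm s (PpfPmg f g) ≤ C * hsNorm s f * hsNorm r g := by
  set w : ℤ → ℝ := fun k => jb k ^ (-(2*r)) with hw
  have hKsum : Summable w := summable_w hr
  have hwpos : ∀ k, 0 < w k := fun k => Real.rpow_pos_of_pos (jb_pos k) _
  set K := ∑' k, w k with hKdef
  have hKpos : 0 < K := Summable.tsum_pos hKsum (fun k => (hwpos k).le) 0 (hwpos 0)
  refine ⟨Real.sqrt K, Real.sqrt_pos.2 hKpos, ?_⟩
  intro f g hF hG
  set g' : ℤ → ℂ := fun k => if k < 0 then g k else 0 with hg'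
  set F : ℤ → ℝ := fun m => jb m ^ (2*s) * ‖f m‖^2 with hFdef
  set G' : ℤ → ℝ := fun k => jb k ^ (2*r) * ‖g' k‖^2 with hG'def
  have hFnn : ∀ m, 0 ≤ F m := fun m =>
    mul_nonneg (Real.rpow_nonneg (jb_nonneg m) _) (sq_nonneg _)
  have hG'nn : ∀ k, 0 ≤ G' k := fun k =>
    mul_nonneg (Real.rpow_nonneg (jb_nonneg k) _) (sq_nonneg _)
  have hG'le : ∀ k, G' k ≤ jb k ^ (2*r) * ‖g k‖^2 := by
    intro k
    by_cases h : k < 0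
    · simp [hG'def, hg', h]
    · simp only [hG'def, hg', if_neg h, norm_zero]
      rw [zero_pow two_ne_zero, mul_zero]
      exact mul_nonneg (Real.rpow_nonneg (jb_nonneg k) _) (sq_nonneg _)
  have hG'sum : Summable G' := Summable.of_nonneg_of_le hG'nn hG'le hG
  set A := ∑' m, F m with hA
  set B := ∑' k, G' k with hB
  have hA0 : 0 ≤ A := tsum_nonneg hFnn
  have hB0 : 0 ≤ B := tsum_nonneg hG'nn
  set φ : ℤ → ℝ := fun m => jb m ^ s * ‖f m‖ with hφ
  set γ : ℤ → ℝ := fun k => jb k ^ r * ‖g' k‖ with hγ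
  have hφnn : ∀ m, 0 ≤ φ m := fun m =>
    mul_nonneg (Real.rpow_nonneg (jb_nonneg m) _) (norm_nonneg _)
  have hγnn : ∀ k, 0 ≤ γ k := fun k =>
    mul_nonneg (Real.rpow_nonneg (jb_nonneg k) _) (norm_nonneg _)
  have hφsq : ∀ m, φ m ^ 2 = F m := by
    intro m; rw [hφ]; simp only []
    rw [mul_pow, rpow_sq (jb_pos m)]
  have hγsq : ∀ k, γ k ^ 2 = G' k := by
    intro k; rw [hγ]; simp only []
    rw [mul_pow, rpow_sq (jb_pos k)]
  have hFleA : ∀ m, F m ≤ A := fun m => Summable.le_tsum hF m (fun _ _ => hFnn _)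
  have hφle : ∀ m, φ m ≤ Real.sqrt A := by
    intro m
    rw [← Real.sqrt_sq (hφnn m)]
    exact Real.sqrt_le_sqrt ((hφsq m) ▸ hFleA m)
  have hfm : ∀ m, ‖f m‖ ≤ Real.sqrt A := fun m =>
    le_trans (le_mul_of_one_le_left (norm_nonneg _) (one_le_jb_rpow m hs)) (hφle m)
  -- summability of ‖g'‖
  have hg'norm : ∀ k, ‖g' k‖ = jb k ^ (-r) * γ k := by
    intro k
    rw [hγ]; simp only []
    rw [← mul_assoc, ← Real.rpow_add (jb_pos k)]
    simp
  have hg'sum : Summable (fun k => ‖g' k‖) := by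
    have hsum : Summable (fun k => jb k ^ (-r) * γ k) := by
      apply Summable.of_nonneg_of_le
        (fun k => mul_nonneg (Real.rpow_nonneg (jb_nonneg k) _) (hγnn k))
        (fun k => ?_) ((hKsum.add hG'sum).mul_left (1/2 : ℝ))
      have h1 : (jb k ^ (-r))^2 = w k := by
        rw [rpow_sq (jb_pos k), hw]; ring_nf
      have h2 := hγsq k
      nlinarith [sq_nonneg (jb k ^ (-r) - γ k)]
    exact hsum.congr (fun k => (hg'norm k).symm)
  -- product-type summabilities
  have hψ2sum : ∀ n : ℤ, Summable (fun k => F (n-k) * G' k) := by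
    intro n
    apply Summable.of_nonneg_of_le (fun k => mul_nonneg (hFnn _) (hG'nn _))
      (fun k => mul_le_mul_of_nonneg_right (hFleA _) (hG'nn k)) (hG'sum.mul_left A)
  set T : ℤ → ℝ := fun n => ∑' k, F (n-k) * G' k with hT
  have hTnn : ∀ n, 0 ≤ T n := fun n => tsum_nonneg (fun k => mul_nonneg (hFnn _) (hG'nn _))
  let e : ℤ × ℤ ≃ ℤ × ℤ :=
    { toFun := fun p => (p.1 - p.2, p.2)
      invFun := fun p => (p.1 + p.2, p.2)
      left_inv := fun p => by simp
      right_inv := fun p => by simp }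
  have hbase : Summable (fun p : ℤ × ℤ => F p.1 * G' p.2) :=
    hF.mul_of_nonneg hG'sum hFnn hG'nn
  have hprod : Summable (fun p : ℤ × ℤ => F (p.1 - p.2) * G' p.2) :=
    (e.summable_iff (f := fun p : ℤ × ℤ => F p.1 * G' p.2)).mpr hbase
  have hTsum : Summable T :=
    ((summable_prod_of_nonneg (fun p => mul_nonneg (hFnn _) (hG'nn _))).1 hprod).2
  have htsumT : ∑' n, T n = A * B := by
    calc ∑' n, T n = ∑' p : ℤ × ℤ, F (p.1 - p.2) * G' p.2 := (Summable.tsum_prod hprod).symm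
      _ = ∑' p : ℤ × ℤ, F p.1 * G' p.2 := e.tsum_eq (fun p : ℤ × ℤ => F p.1 * G' p.2)
      _ = A * B := by
          rw [Summable.tsum_prod hbase]
          simp_rw [tsum_mul_left]
          rw [tsum_mul_right]
  -- pointwise bound
  set c : ℤ → ℂ := PpfPmg f g with hc
  set W : ℤ → ℝ := fun n => jb n ^ (2*s) * ‖c n‖^2 with hW
  have hWnn : ∀ n, 0 ≤ W n := fun n =>
    mul_nonneg (Real.rpow_nonneg (jb_nonneg n) _) (sq_nonneg _)
  have hWle : ∀ n, W n ≤ K * T n := by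
    intro n
    by_cases hn : 0 < n
    · have hcn : c n = ∑' k, f (n - k) * g' k := by
        rw [hc]; simp only [PpfPmg, if_pos hn]; rfl
      have hnsum' : Summable (fun k => ‖f (n-k)‖ * ‖g' k‖) := by
        apply Summable.of_nonneg_of_le
          (fun k => mul_nonneg (norm_nonneg _) (norm_nonneg _))
          (fun k => mul_le_mul_of_nonneg_right (hfm _) (norm_nonneg _))
          (hg'sum.mul_left (Real.sqrt A))
      have hnsum : Summable (fun k => ‖f (n-k) * g' k‖) :=
        hnsum'.congr (fun k => (norm_mul _ _).symm)
      have hrsum : Summable (fun k => φ (n-k) * ‖g' k‖) := by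
        apply Summable.of_nonneg_of_le
          (fun k => mul_nonneg (hφnn _) (norm_nonneg _))
          (fun k => mul_le_mul_of_nonneg_right (hφle _) (norm_nonneg _))
          (hg'sum.mul_left (Real.sqrt A))
      have step1 : ‖c n‖ ≤ ∑' k, ‖f (n-k)‖ * ‖g' k‖ := by
        rw [hcn]
        refine le_trans (norm_tsum_le_tsum_norm hnsum) ?_
        exact le_of_eq (tsum_congr fun k => norm_mul _ _)
      have step2 : jb n ^ s * ‖c n‖ ≤ ∑' k, φ (n-k) * ‖g' k‖ := by
        calc jb n ^ s * ‖c n‖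
            ≤ jb n ^ s * ∑' k, ‖f (n-k)‖ * ‖g' k‖ :=
              mul_le_mul_of_nonneg_left step1 (Real.rpow_nonneg (jb_nonneg n) s)
          _ = ∑' k, jb n ^ s * (‖f (n-k)‖ * ‖g' k‖) := tsum_mul_left.symm
          _ ≤ ∑' k, φ (n-k) * ‖g' k‖ := by
              apply Summable.tsum_le_tsum _ (hnsum'.mul_left _) hrsum
              intro k
              by_cases hk : k < 0
              · rw [hφ]; simp only []
                rw [← mul_assoc]
                apply mul_le_mul_of_nonneg_right _ (norm_nonneg _)
                apply mul_le_mul_of_nonneg_right _ (norm_nonneg _)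
                exact Real.rpow_le_rpow (jb_nonneg n) (jb_le_jb hn.le (by omega)) hs
              · have : g' k = 0 := by rw [hg']; simp [hk]
                simp [this]
      have step3 : ∑' k, φ (n-k) * ‖g' k‖ = ∑' k, jb k ^ (-r) * (φ (n-k) * γ k) := by
        refine tsum_congr fun k => ?_
        have h1 : jb k ^ (-r) * jb k ^ r = 1 := by
          rw [← Real.rpow_add (jb_pos k)]; simp
        calc φ (n-k) * ‖g' k‖ = (jb k ^ (-r) * jb k ^ r) * (φ (n-k) * ‖g' k‖) := by
              rw [h1, one_mul]
          _ = jb k ^ (-r) * (φ (n-k) * γ k) := by rw [hγ]; ring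
      have hwsq : ∀ k : ℤ, (jb k ^ (-r))^2 = w k := by
        intro k; rw [rpow_sq (jb_pos k), hw]; ring_nf
      have hψsq : ∀ k : ℤ, (φ (n-k) * γ k)^2 = F (n-k) * G' k := by
        intro k; rw [mul_pow, hφsq, hγsq]
      have step4 : ∑' k, jb k ^ (-r) * (φ (n-k) * γ k) ≤ Real.sqrt K * Real.sqrt (T n) := by
        have hcs := tsum_cs (u := fun k => jb k ^ (-r)) (v := fun k => φ (n-k) * γ k)
          (fun k => Real.rpow_nonneg (jb_nonneg k) _)
          (fun k => mul_nonneg (hφnn _) (hγnn _))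
          (hKsum.congr (fun k => (hwsq k).symm))
          ((hψ2sum n).congr (fun k => (hψsq k).symm))
        have e1 : ∑' k : ℤ, (jb k ^ (-r))^2 = K := by
          rw [hKdef]; exact tsum_congr hwsq
        have e2 : ∑' k : ℤ, (φ (n-k) * γ k)^2 = T n := by
          rw [hT]; exact tsum_congr hψsq
        rwa [e1, e2] at hcs
      have hfin : jb n ^ s * ‖c n‖ ≤ Real.sqrt K * Real.sqrt (T n) :=
        le_trans step2 (le_trans (le_of_eq step3) step4)
      have hsq : (jb n ^ s * ‖c n‖)^2 ≤ (Real.sqrt K * Real.sqrt (T n))^2 := by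
        apply pow_le_pow_left₀ (mul_nonneg (Real.rpow_nonneg (jb_nonneg n) _) (norm_nonneg _)) hfin
      calc W n = (jb n ^ s * ‖c n‖)^2 := by
            rw [hW]; simp only []
            rw [mul_pow, rpow_sq (jb_pos n)]
        _ ≤ (Real.sqrt K * Real.sqrt (T n))^2 := hsq
        _ = K * T n := by
            rw [mul_pow, Real.sq_sqrt hKpos.le, Real.sq_sqrt (hTnn n)]
    · have : c n = 0 := by rw [hc]; simp [PpfPmg, hn]
      rw [hW]; simp only [this]
      simp only [norm_zero]
      have : jb n ^ (2*s) * (0:ℝ)^2 = 0 := by ring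
      rw [this]
      exact mul_nonneg hKpos.le (hTnn n)
  have hWsum : Summable W :=
    Summable.of_nonneg_of_le hWnn hWle (hTsum.mul_left K)
  refine ⟨hWsum, ?_⟩
  have htW : ∑' n, W n ≤ K * (A * B) := by
    calc ∑' n, W n ≤ ∑' n, K * T n := Summable.tsum_le_tsum hWle hWsum (hTsum.mul_left K)
      _ = K * ∑' n, T n := tsum_mul_left
      _ = K * (A * B) := by rw [htsumT]
  have hnormc : hsNorm s c = Real.sqrt (∑' n, W n) := rfl
  have hnormf : hsNorm s f = Real.sqrt A := rfl
  have hBle : B ≤ ∑' k, jb k ^ (2*r) * ‖g k‖^2 := Summable.tsum_le_tsum hG'le hG'sum hG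
  calc hsNorm s c ≤ Real.sqrt (K * (A * B)) := by
        rw [hnormc]; exact Real.sqrt_le_sqrt htW
    _ = Real.sqrt K * (Real.sqrt A * Real.sqrt B) := by
        rw [Real.sqrt_mul hKpos.le, Real.sqrt_mul hA0]
    _ ≤ Real.sqrt K * (Real.sqrt A * hsNorm r g) := by
        gcongr
        exact Real.sqrt_le_sqrt hBle
    _ = Real.sqrt K * hsNorm s f * hsNorm r g := by rw [hnormf]; ring
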